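/- Let C be a set of nonnegative integers of asymptotic density 1, and let g be a growth function with lim_{x→∞} g(x)/x = ∞. Then there exists a sequence {c_n} of pairwise distinct elements of C with c_n ~ g(n). -/

import Mathlib

/-- A growth function: positive, strictly increasing, continuous and unbounded on `[1,∞)`. -/
def IsGrowthFun (f : ℝ → ℝ) : Prop :=
  (∀ x ≥ (1 : ℝ), 0 < f x) ∧ StrictMonoOn f (Set.Ici 1) ∧
    ContinuousOn f (Set.Ici 1) ∧ Filter.Tendsto f Filter.atTop Filter.atTop

/-- The threshold function: `g (max n 1)`. -/
noncomputable def gthr (g : ℝ → ℝ) (n : ℕ) : ℝ := g ((max n 1 : ℕ) : ℝ)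

/-- The greedy sequence: `cseq n` is the least element of `C` that is at least the
threshold `gthr g n` and greater than the previous term. -/
noncomputable def cseq (C : Set ℕ) (g : ℝ → ℝ) : ℕ → ℕ
  | 0 => sInf {k | k ∈ C ∧ gthr g 0 ≤ (k : ℝ)}
  | n + 1 => sInf {k | k ∈ C ∧ gthr g (n + 1) ≤ (k : ℝ) ∧ cseq C g n < k}

lemma cseq_set_nonempty {C : Set ℕ} (hub : ∀ N : ℕ, ∃ k ∈ C, N ≤ k) (t : ℝ) (p : ℕ) :
    {k | k ∈ C ∧ t ≤ (k : ℝ) ∧ p < k}.Nonempty := by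
  obtain ⟨k, hkC, hk⟩ := hub (max (⌈t⌉₊) (p + 1))
  refine ⟨k, hkC, ?_, ?_⟩
  · calc t ≤ (⌈t⌉₊ : ℝ) := Nat.le_ceil t
      _ ≤ (k : ℝ) := by exact_mod_cast le_trans (le_max_left _ _) hk
  · omega
lemma cseq_set0_nonempty {C : Set ℕ} (hub : ∀ N : ℕ, ∃ k ∈ C, N ≤ k) (t : ℝ) :
    {k | k ∈ C ∧ t ≤ (k : ℝ)}.Nonempty := by
  obtain ⟨k, hkC, h1, _⟩ := cseq_set_nonempty hub t 0
  exact ⟨k, hkC, h1⟩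

lemma cseq_spec {C : Set ℕ} (g : ℝ → ℝ) (hub : ∀ N : ℕ, ∃ k ∈ C, N ≤ k) (n : ℕ) :
    cseq C g n ∈ C ∧ gthr g n ≤ (cseq C g n : ℝ) := by
  cases n with
  | zero =>
    have := Nat.sInf_mem (cseq_set0_nonempty hub (gthr g 0))
    exact ⟨this.1, this.2⟩
  | succ n =>
    have := Nat.sInf_mem (cseq_set_nonempty hub (gthr g (n + 1)) (cseq C g n))
    exact ⟨this.1, this.2.1⟩

lemma cseq_lt_succ {C : Set ℕ} (g : ℝ → ℝ) (hub : ∀ N : ℕ, ∃ k ∈ C, N ≤ k) (n : ℕ) :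
    cseq C g n < cseq C g (n + 1) := by
  have := Nat.sInf_mem (cseq_set_nonempty hub (gthr g (n + 1)) (cseq C g n))
  exact this.2.2

/-- Key lemma: every element of `C` above the threshold `gthr g n` and at most `cseq n`
is one of `cseq 0, …, cseq n`. -/
lemma cseq_key {C : Set ℕ} {g : ℝ → ℝ} (hub : ∀ N : ℕ, ∃ k ∈ C, N ≤ k)
    (hmono : Monotone (gthr g)) :
    ∀ n : ℕ, ∀ k ∈ C, gthr g n ≤ (k : ℝ) → k ≤ cseq C g n → ∃ m ≤ n, cseq C g m = k := by
  intro n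
  induction n with
  | zero =>
    intro k hkC hk1 hk2
    have h := Nat.sInf_le (s := {k | k ∈ C ∧ gthr g 0 ≤ (k : ℝ)}) ⟨hkC, hk1⟩
    exact ⟨0, le_refl 0, le_antisymm h hk2⟩
  | succ n ih =>
    intro k hkC hk1 hk2
    by_cases hcase : cseq C g n < k
    · have h := Nat.sInf_le
        (s := {k | k ∈ C ∧ gthr g (n + 1) ≤ (k : ℝ) ∧ cseq C g n < k}) ⟨hkC, hk1, hcase⟩
      exact ⟨n + 1, le_refl _, le_antisymm h hk2⟩
    · push_neg at hcase
      obtain ⟨m, hm, hmk⟩ := ih k hkC (le_trans (hmono (Nat.le_succ n)) hk1) hcase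
      exact ⟨m, le_trans hm (Nat.le_succ n), hmk⟩

theorem stmt8 (C : Set ℕ)
    (hC : Filter.Tendsto
      (fun x : ℝ => ((C ∩ {m : ℕ | (m : ℝ) ≤ x}).ncard : ℝ) / x)
      Filter.atTop (nhds 1))
    (g : ℝ → ℝ) (hg : IsGrowthFun g)
    (hgx : Filter.Tendsto (fun x => g x / x) Filter.atTop Filter.atTop) :
    ∃ c : ℕ → ℕ, Function.Injective c ∧ (∀ n, c n ∈ C) ∧
      Filter.Tendsto (fun n : ℕ => (c n : ℝ) / g n) Filter.atTop (nhds 1) := by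
  obtain ⟨hpos, hsm, hcont, htop⟩ := hg
  -- finiteness of counting sets
  have hfin : ∀ x : ℝ, (C ∩ {m : ℕ | (m : ℝ) ≤ x}).Finite := by
    intro x
    apply Set.Finite.subset (Set.finite_Iic ⌈x⌉₊)
    rintro m ⟨-, hm⟩
    have : (m : ℝ) ≤ (⌈x⌉₊ : ℝ) := le_trans hm (Nat.le_ceil x)
    exact_mod_cast this
  -- C is unbounded
  have hub : ∀ N : ℕ, ∃ k ∈ C, N ≤ k := by
    by_contra h
    push_neg at h
    obtain ⟨N, hN⟩ := h
    have hbd : ∀ x : ℝ, ((C ∩ {m : ℕ | (m : ℝ) ≤ x}).ncard : ℝ) ≤ N := by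
      intro x
      have hsub : C ∩ {m : ℕ | (m : ℝ) ≤ x} ⊆ Set.Iio N := by
        rintro m ⟨hmC, -⟩; exact hN m hmC
      have := Set.ncard_le_ncard hsub (Set.finite_Iio N)
      have h2 : (Set.Iio N).ncard = N := by
        simp [← Finset.coe_Iio, Set.ncard_coe_finset]
      exact_mod_cast h2 ▸ this
    have h0 : Filter.Tendsto (fun x : ℝ => (N : ℝ) / x) Filter.atTop (nhds 0) :=
      tendsto_const_nhds.div_atTop Filter.tendsto_id
    have hle : (1 : ℝ) ≤ 0 := by
      refine le_of_tendsto_of_tendsto hC h0 ?_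
      filter_upwards [Filter.eventually_ge_atTop (1 : ℝ)] with x hx
      have hx0 : (0 : ℝ) < x := lt_of_lt_of_le zero_lt_one hx
      exact div_le_div_of_nonneg_right (hbd x) hx0.le
    linarith
  -- monotonicity of the threshold
  have hmono : Monotone (gthr g) := by
    intro m n hmn
    have h1 : ((max m 1 : ℕ) : ℝ) ∈ Set.Ici (1 : ℝ) := by
      simp only [Set.mem_Ici]; exact_mod_cast le_max_right m 1
    have h2 : ((max n 1 : ℕ) : ℝ) ∈ Set.Ici (1 : ℝ) := by
      simp only [Set.mem_Ici]; exact_mod_cast le_max_right n 1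
    exact hsm.monotoneOn h1 h2 (by exact_mod_cast max_le_max hmn (le_refl 1))
  have hgthr : ∀ n : ℕ, 1 ≤ n → gthr g n = g n := by
    intro n hn
    unfold gthr
    congr 2
    exact max_eq_left hn
  set c := cseq C g with hcdef
  have hmemC : ∀ n, c n ∈ C := fun n => (cseq_spec g hub n).1
  have hge : ∀ n, gthr g n ≤ (c n : ℝ) := fun n => (cseq_spec g hub n).2
  have hsmc : StrictMono c := strictMono_nat_of_lt_succ (fun n => cseq_lt_succ g hub n)
  refine ⟨c, hsmc.injective, hmemC, ?_⟩
  rw [Metric.tendsto_atTop]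
  intro ε hε
  set ε' : ℝ := ε / 2 with hε'def
  have hε'pos : 0 < ε' := by positivity
  set δ : ℝ := ε' / (2 * (2 + ε')) with hδdef
  have hδpos : 0 < δ := by positivity
  have hδ2 : δ * (2 + ε') = ε' / 2 := by
    have h2ε : (2 + ε') ≠ 0 := by positivity
    rw [hδdef, div_mul_eq_mul_div, div_eq_div_iff (by positivity) (by norm_num)]
    ring
  obtain ⟨X0, hX0⟩ := (Metric.tendsto_atTop.mp hC) δ hδpos
  set X : ℝ := max X0 1 with hXdef
  have hX1 : (1 : ℝ) ≤ X := le_max_right X0 1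
  have hdens : ∀ x : ℝ, X ≤ x → (1 - δ) * x ≤ ((C ∩ {m : ℕ | (m : ℝ) ≤ x}).ncard : ℝ) ∧
      ((C ∩ {m : ℕ | (m : ℝ) ≤ x}).ncard : ℝ) ≤ (1 + δ) * x := by
    intro x hx
    have hx1 : (1 : ℝ) ≤ x := le_trans hX1 hx
    have hx0 : (0 : ℝ) < x := lt_of_lt_of_le zero_lt_one hx1
    have hd := hX0 x (le_trans (le_max_left X0 1) hx)
    rw [Real.dist_eq] at hd
    have habs := abs_lt.mp hd
    have hl : 1 - δ < ((C ∩ {m : ℕ | (m : ℝ) ≤ x}).ncard : ℝ) / x := by linarith [habs.1]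
    have hu : ((C ∩ {m : ℕ | (m : ℝ) ≤ x}).ncard : ℝ) / x < 1 + δ := by linarith [habs.2]
    exact ⟨le_of_lt ((lt_div_iff₀ hx0).mp hl), le_of_lt ((div_lt_iff₀ hx0).mp hu)⟩
  have hEa : ∀ᶠ n : ℕ in Filter.atTop, 1 ≤ n := Filter.eventually_ge_atTop 1
  have hEb : ∀ᶠ n : ℕ in Filter.atTop, X ≤ g n :=
    (htop.comp tendsto_natCast_atTop_atTop).eventually_ge_atTop X
  have hEc : ∀ᶠ n : ℕ in Filter.atTop, 6 / ε' ≤ g n / n :=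
    (hgx.comp tendsto_natCast_atTop_atTop).eventually_ge_atTop (6 / ε')
  have hev : ∀ᶠ n : ℕ in Filter.atTop, dist ((c n : ℝ) / g n) 1 < ε := by
    filter_upwards [hEa, hEb, hEc] with n h1 h2 hc6
    have hn1 : (1 : ℝ) ≤ (n : ℝ) := by exact_mod_cast h1
    have hn0 : (0 : ℝ) < (n : ℝ) := lt_of_lt_of_le zero_lt_one hn1
    have hgn1 : (1 : ℝ) ≤ g n := le_trans hX1 h2
    have hgn0 : (0 : ℝ) < g n := lt_of_lt_of_le zero_lt_one hgn1
    -- the growth estimate (ε'/2) g n ≥ n + 2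
    have hgrow : ((n : ℝ) + 2) ≤ (ε' / 2) * g n := by
      have hg6 : (6 / ε') * (n : ℝ) ≤ g n := (le_div_iff₀ hn0).mp hc6
      have heq : (ε' / 2) * ((6 / ε') * (n : ℝ)) = 3 * n := by
        field_simp
        ring
      have := mul_le_mul_of_nonneg_left hg6 (le_of_lt (by positivity : (0:ℝ) < ε' / 2))
      rw [heq] at this
      linarith
    -- lower bound
    have hlow : g n ≤ (c n : ℝ) := by
      have := hge n
      rwa [hgthr n h1] at this
    -- upper bound
    have hupper : (c n : ℝ) ≤ (1 + ε') * g n := by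
      by_contra hcon
      push_neg at hcon
      set T : Set ℕ := C ∩ {k : ℕ | g n < (k : ℝ) ∧ (k : ℝ) ≤ (1 + ε') * g n} with hTdef
      have hTsub : T ⊆ c '' Set.Iic n := by
        rintro k ⟨hkC, hk1, hk2⟩
        obtain ⟨m, hm, hmk⟩ := cseq_key hub hmono n k hkC
          (by rw [hgthr n h1]; exact le_of_lt hk1)
          (by
            have hklt : (k : ℝ) < (c n : ℝ) := lt_of_le_of_lt hk2 hcon
            exact_mod_cast hklt.le)
        exact ⟨m, hm, hmk⟩
      have hfinT : T.Finite := by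
        apply (hfin ((1 + ε') * g n)).subset
        rintro k ⟨hkC, _, hk2⟩
        exact ⟨hkC, hk2⟩
      have hT1 : (T.ncard : ℝ) ≤ (n : ℝ) + 1 := by
        have ha := Set.ncard_le_ncard hTsub ((Set.finite_Iic n).image c)
        have hb := Set.ncard_image_le (f := c) (Set.finite_Iic n)
        have hc3 : (Set.Iic n).ncard = n + 1 := by
          simp [← Finset.coe_Iic, Set.ncard_coe_finset]
        have : T.ncard ≤ n + 1 := le_trans ha (hc3 ▸ hb)
        exact_mod_cast this
      have hbX : X ≤ (1 + ε') * g n :=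
        le_trans h2 (le_mul_of_one_le_left hgn0.le (by linarith))
      have hA := (hdens ((1 + ε') * g n) hbX).1
      have hB := (hdens (g n) h2).2
      have hsplit : C ∩ {m : ℕ | (m : ℝ) ≤ (1 + ε') * g n} ⊆
          (C ∩ {m : ℕ | (m : ℝ) ≤ g n}) ∪ T := by
        rintro k ⟨hkC, hk⟩
        by_cases hka : (k : ℝ) ≤ g n
        · exact Or.inl ⟨hkC, hka⟩
        · exact Or.inr ⟨hkC, lt_of_not_ge hka, hk⟩
      have hcount : (C ∩ {m : ℕ | (m : ℝ) ≤ (1 + ε') * g n}).ncard ≤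
          (C ∩ {m : ℕ | (m : ℝ) ≤ g n}).ncard + T.ncard :=
        le_trans (Set.ncard_le_ncard hsplit ((hfin _).union hfinT)) (Set.ncard_union_le _ _)
      have e3 : ((C ∩ {m : ℕ | (m : ℝ) ≤ (1 + ε') * g n}).ncard : ℝ) ≤
          ((C ∩ {m : ℕ | (m : ℝ) ≤ g n}).ncard : ℝ) + (T.ncard : ℝ) := by
        exact_mod_cast hcount
      have expand : (1 - δ) * ((1 + ε') * g n) - (1 + δ) * g n = (ε' / 2) * g n := by
        have : ε' / 2 = ε' - δ * (2 + ε') := by rw [hδ2]; ring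
        rw [this]; ring
      have hTbig : ((n : ℝ) + 2) ≤ (T.ncard : ℝ) := by linarith
      linarith
    -- conclude
    have hlo' : 1 ≤ (c n : ℝ) / g n := (one_le_div hgn0).mpr hlow
    have hhi' : (c n : ℝ) / g n ≤ 1 + ε' := (div_le_iff₀ hgn0).mpr (by linarith)
    rw [Real.dist_eq, abs_of_nonneg (by linarith)]
    rw [hε'def] at hhi'
    linarith
  exact Filter.eventually_atTop.mp hev
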